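/- Let ξ = ∑_{i≥0} λ_i χ_i be a radial unit vector in ℓ²(F_N), where F_N is the free group on N generators with canonical symmetric generating set S of size 2N, and χ_i is the indicator function of the sphere of radius i. Define φ_ξ(g) = ⟪λ(g)ξ, ξ⟫ where λ is the left regular representation. Then for every g ∈ F_N, |φ_ξ(g)| ≤ (|g| + 1)(2N − 1)^{−|g|/2}. -/

import Mathlib

open FreeGroup List

set_option linter.unusedSectionVars false

variable {α : Type*} [DecidableEq α]

abbrev st15inv (a : α × Bool) : α × Bool := (a.1, !a.2)

def St15Rd (L : List (α × Bool)) : Prop := List.Chain' (fun a b => b ≠ st15inv a) L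

lemma st15inv_inv (a : α × Bool) : st15inv (st15inv a) = a := by cases a; simp

lemma st15_ne_inv_comm {a b : α × Bool} (h : b ≠ st15inv a) : a ≠ st15inv b := by
  intro h'
  apply h
  rw [h', st15inv_inv]

lemma st15_not_chain' {β : Type*} {R : β → β → Prop} :
    ∀ {l : List β}, ¬ l.Chain' R → ∃ l₁ a b l₂, l = l₁ ++ a :: b :: l₂ ∧ ¬ R a b := by
  intro l
  induction l with
  | nil => intro h; exact absurd List.isChain_nil h
  | cons x xs ih =>
    cases xs with
    | nil => intro h; exact absurd (List.isChain_singleton x) h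
    | cons y ys =>
      intro h
      change ¬ List.IsChain R (x :: y :: ys) at h; rw [List.isChain_cons_cons] at h
      by_cases hxy : R x y
      · obtain ⟨l₁, a, b, l₂, hE, hr⟩ := ih (fun hc => h ⟨hxy, hc⟩)
        exact ⟨x :: l₁, a, b, l₂, by rw [hE]; rfl, hr⟩
      · exact ⟨[], x, y, ys, rfl, hxy⟩

lemma st15_rd_reduce (L : List (α × Bool)) : St15Rd (reduce L) := by
  by_contra h
  obtain ⟨l₁, a, b, l₂, hE, hr⟩ := st15_not_chain' h
  have hb : b = (a.1, !a.2) := not_not.mp hr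
  refine FreeGroup.reduce.not (L₁ := L) (L₂ := l₁) (L₃ := l₂) (x := a.1) (b := a.2) ?_
  rw [hE, hb]

lemma st15_rd_no_step {L M : List (α × Bool)} (h : St15Rd L) (hs : Red.Step L M) : False := by
  cases hs with
  | not =>
    rename_i L1 L2 x b
    unfold St15Rd at h
    have h2 := (List.isChain_append.mp h).2.1
    exact (List.isChain_cons_cons.mp h2).1 rfl

lemma st15_rd_reduce_self {L : List (α × Bool)} (h : St15Rd L) : reduce L = L := by
  rcases Relation.ReflTransGen.cases_head (FreeGroup.reduce.red (L := L)) with h1 | ⟨c, hstep, _⟩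
  · exact h1.symm
  · exact absurd hstep (fun hs => st15_rd_no_step h hs)

lemma st15_invRev_cons (a : α × Bool) (l : List (α × Bool)) :
    invRev (a :: l) = invRev l ++ [st15inv a] := by
  simp [invRev]

lemma st15_rd_append_left {l₁ l₂ : List (α × Bool)} (h : St15Rd (l₁ ++ l₂)) : St15Rd l₁ :=
  (List.isChain_append.mp h).1

lemma st15_rd_append_right {l₁ l₂ : List (α × Bool)} (h : St15Rd (l₁ ++ l₂)) : St15Rd l₂ :=
  (List.isChain_append.mp h).2.1

lemma st15_rd_tail {a : α × Bool} {l : List (α × Bool)} (h : St15Rd (a :: l)) : St15Rd l :=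
  h.tail

/-- main decomposition lemma -/
lemma st15_decomp : ∀ (w u : List (α × Bool)), St15Rd u → St15Rd w →
    ∃ t u', t ≤ w.length ∧ u = u' ++ invRev (w.take t) ∧
      reduce (u ++ w) = u' ++ w.drop t ∧ St15Rd (u' ++ w.drop t) := by
  intro w
  induction w with
  | nil =>
    intro u hu _
    exact ⟨0, u, Nat.zero_le _, by simp [invRev], by simpa using st15_rd_reduce_self hu,
      by simpa using hu⟩
  | cons a w₀ ih =>
    intro u hu hw
    rcases List.eq_nil_or_concat u with rfl | ⟨u₀, b, rfl⟩
    · exact ⟨0, [], Nat.zero_le _, by simp [invRev], by simpa using st15_rd_reduce_self hw,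
        by simpa using hw⟩
    · rw [List.concat_eq_append] at *
      by_cases hb : b = st15inv a
      · -- cancellation
        have hred : reduce ((u₀ ++ [b]) ++ a :: w₀) = reduce (u₀ ++ w₀) := by
          apply FreeGroup.reduce.Step.eq
          have : (u₀ ++ [b]) ++ a :: w₀ = u₀ ++ (a.1, !a.2) :: (a.1, !(!a.2)) :: w₀ := by
            rw [hb]; cases a; simp
          rw [this]
          exact FreeGroup.Red.Step.not
        obtain ⟨t₀, u', ht₀, hu', hr, hrd⟩ := ih u₀ (st15_rd_append_left hu) (st15_rd_tail hw)
        refine ⟨t₀ + 1, u', by simpa using Nat.succ_le_succ ht₀, ?_, ?_, ?_⟩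
        · rw [List.take_succ_cons, st15_invRev_cons, hu', hb]
          simp
        · rw [hred, List.drop_succ_cons, hr]
        · simpa using hrd
      · -- no cancellation
        have hrd : St15Rd ((u₀ ++ [b]) ++ a :: w₀) := by
          rw [St15Rd]; change List.IsChain _ _; rw [List.isChain_append]
          refine ⟨hu, hw, ?_⟩
          intro x hx y hy
          rw [List.getLast?_concat] at hx
          simp only [List.head?_cons, Option.mem_def, Option.some_inj] at hx hy
          subst hx; subst hy
          exact st15_ne_inv_comm hb
        refine ⟨0, u₀ ++ [b], Nat.zero_le _, by simp [invRev], ?_, by simpa using hrd⟩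
        simpa using st15_rd_reduce_self hrd
-- appended to part1
variable [Fintype α]

def St15S (m : ℕ) (f : α × Bool) : Set (List (α × Bool)) :=
  {l | St15Rd l ∧ l.length = m ∧ l.head? ≠ some f}

lemma st15_finite_len {β : Type*} [Finite β] (m : ℕ) : {l : List β | l.length = m}.Finite := by
  apply Set.Finite.subset (Set.finite_range (List.ofFn : (Fin m → β) → List β))
  intro l hl
  simp only [Set.mem_setOf_eq] at hl
  refine ⟨fun i => l.get (Fin.cast hl.symm i), ?_⟩
  apply List.ext_get
  · simp [hl]
  · intro i h1 h2
    simp [List.get_ofFn]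

lemma st15S_finite (m : ℕ) (f : α × Bool) : (St15S m f).Finite :=
  Set.Finite.subset (st15_finite_len m) (fun l hl => hl.2.1)

lemma st15S_card (m : ℕ) (f : α × Bool) :
    Nat.card (St15S m f) = (2 * Fintype.card α - 1) ^ m := by
  induction m generalizing f with
  | zero =>
    have h0 : St15S 0 f = {([] : List (α × Bool))} := by
      ext l
      constructor
      · rintro ⟨_, hlen, _⟩
        exact List.length_eq_zero_iff.mp hlen
      · rintro rfl
        refine ⟨List.isChain_nil, rfl, by simp⟩
    rw [h0, pow_zero, Nat.card_coe_set_eq, Set.ncard_singleton]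
  | succ m ih =>
    set K := 2 * Fintype.card α - 1 with hK
    haveI : ∀ z : α × Bool, Finite ↥(St15S m z) := fun z => (st15S_finite m z).to_subtype
    haveI : Finite ↥(St15S (m+1) f) := (st15S_finite (m+1) f).to_subtype
    set Sig := Σ y : {y : α × Bool // y ≠ f}, ↥(St15S m (st15inv y.1)) with hSig
    have hne : ∀ (l : List (α × Bool)), l ∈ St15S (m+1) f → l ≠ [] := by
      intro l hl h
      rw [h] at hl
      exact Nat.succ_ne_zero m hl.2.1.symm
    have inj1 : ∃ F : ↥(St15S (m+1) f) → Sig, Function.Injective F := by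
      refine ⟨fun x => ⟨⟨x.1.head (hne x.1 x.2), ?_⟩, ⟨x.1.tail, ?_, ?_, ?_⟩⟩, ?_⟩
      · intro h
        exact x.2.2.2 (by rw [List.head?_eq_head (hne x.1 x.2), h])
      · exact (x.2.1).tail
      · simp [List.length_tail, x.2.2.1]
      · have hc : St15Rd (x.1.head (hne x.1 x.2) :: x.1.tail) := by
          rw [List.cons_head_tail]; exact x.2.1
        rw [St15Rd] at hc; change List.IsChain _ _ at hc; rw [List.isChain_cons] at hc
        intro h
        exact hc.1 _ h rfl
      · intro x y h
        have h' := congrArg (fun z : Sig => (z.1.1 :: z.2.1 : List (α × Bool))) h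
        simp only [List.cons_head_tail] at h'
        exact Subtype.ext h'
    have inj2 : ∃ G : Sig → ↥(St15S (m+1) f), Function.Injective G := by
      refine ⟨fun z => ⟨z.1.1 :: z.2.1, ?_, by simp [z.2.2.2.1], by simpa using z.1.2⟩, ?_⟩
      · rw [St15Rd]; change List.IsChain _ _; rw [List.isChain_cons]
        refine ⟨?_, z.2.2.1⟩
        intro y hy h
        exact z.2.2.2.2 (by rw [hy, h])
      · rintro ⟨⟨y, hy⟩, ⟨l, hl⟩⟩ ⟨⟨y', hy'⟩, ⟨l', hl'⟩⟩ h
        have h' : y :: l = y' :: l' := Subtype.ext_iff.mp h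
        injection h' with h1 h2
        subst h1
        have : l = l' := h2
        subst this
        rfl
    have hcard : Nat.card ↥(St15S (m+1) f) = Nat.card Sig := by
      obtain ⟨F, hF⟩ := inj1
      obtain ⟨G, hG⟩ := inj2
      exact le_antisymm (Nat.card_le_card_of_injective F hF) (Nat.card_le_card_of_injective G hG)
    rw [hcard]
    haveI : ∀ y : {y : α × Bool // y ≠ f}, Fintype ↥(St15S m (st15inv y.1)) :=
      fun y => Fintype.ofFinite _
    rw [Nat.card_eq_fintype_card, Fintype.card_sigma]
    have hcongr : ∀ y : {y : α × Bool // y ≠ f}, Fintype.card ↥(St15S m (st15inv y.1)) = K ^ m := by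
      intro y
      rw [← Nat.card_eq_fintype_card, ih]
    rw [Finset.sum_congr rfl (fun y _ => hcongr y), Finset.sum_const, Finset.card_univ]
    have hcs : Fintype.card {y : α × Bool // y ≠ f} = K := by
      have h1 : Fintype.card {y : α × Bool // ¬ y = f} =
          Fintype.card (α × Bool) - Fintype.card {y : α × Bool // y = f} :=
        Fintype.card_subtype_compl _
      have h2 : Fintype.card {y : α × Bool // y = f} = 1 := Fintype.card_subtype_eq f
      have h3 : Fintype.card (α × Bool) = 2 * Fintype.card α := by
        simp [Fintype.card_prod, mul_comm]
      simp only [ne_eq, h1, h2, h3, hK]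
    rw [hcs, smul_eq_mul]
    ring
-- part 3: spheres and fibers
variable [Nonempty α]

lemma st15_rd_toWord (x : FreeGroup α) : St15Rd x.toWord := by
  have := st15_rd_reduce (L := x.toWord)
  rwa [FreeGroup.reduce_toWord] at this

def St15Sph (i : ℕ) : Set (FreeGroup α) := {h | h.norm = i}

lemma st15_sph_finite (i : ℕ) : (St15Sph (α := α) i).Finite := by
  have : (St15Sph (α := α) i) ⊆ FreeGroup.toWord ⁻¹' {l | l.length = i} := fun h hh => hh
  exact Set.Finite.subset ((st15_finite_len i).preimage
    (Set.injOn_of_injective FreeGroup.toWord_injective)) this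

lemma st15_sph_card_ge (i : ℕ) :
    (2 * Fintype.card α - 1) ^ i ≤ Nat.card (St15Sph (α := α) i) := by
  haveI : Finite ↥(St15Sph (α := α) i) := (st15_sph_finite i).to_subtype
  set f₀ : α × Bool := (Classical.arbitrary α, true)
  rw [← st15S_card i f₀]
  refine Nat.card_le_card_of_injective
    (fun l => ⟨FreeGroup.mk l.1, ?_⟩) ?_
  · show (FreeGroup.mk l.1).norm = i
    rw [FreeGroup.norm, FreeGroup.toWord_mk, st15_rd_reduce_self l.2.1, l.2.2.1]
  · intro l l' h
    apply Subtype.ext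
    have h' : FreeGroup.mk l.1 = FreeGroup.mk l'.1 := Subtype.ext_iff.mp h
    have := congrArg FreeGroup.toWord h'
    rwa [FreeGroup.toWord_mk, FreeGroup.toWord_mk, st15_rd_reduce_self l.2.1,
      st15_rd_reduce_self l'.2.1] at this

/-- decomposition at the group level -/
lemma st15_exists_t (g h : FreeGroup α) : ∃ t u', t ≤ h.norm ∧
    (g⁻¹).toWord = u' ++ invRev ((h.toWord).take t) ∧
    (g⁻¹ * h).toWord = u' ++ (h.toWord).drop t ∧ St15Rd (u' ++ (h.toWord).drop t) ∧
    u'.length + t = g.norm ∧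
    (g⁻¹ * h).norm = u'.length + (h.norm - t) := by
  obtain ⟨t, u', ht, hueq, hred, hrd⟩ :=
    st15_decomp h.toWord (g⁻¹).toWord (st15_rd_toWord g⁻¹) (st15_rd_toWord h)
  have hmul : (g⁻¹ * h).toWord = u' ++ (h.toWord).drop t := by
    have : g⁻¹ * h = FreeGroup.mk ((g⁻¹).toWord ++ h.toWord) := by
      rw [← FreeGroup.mul_mk, FreeGroup.mk_toWord, FreeGroup.mk_toWord]
    rw [this, FreeGroup.toWord_mk, hred]
  refine ⟨t, u', ht, hueq, hmul, hrd, ?_, ?_⟩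
  · have := congrArg List.length hueq
    rw [List.length_append, FreeGroup.invRev_length, List.length_take] at this
    have hn : (g⁻¹).toWord.length = g.norm := by
      rw [← FreeGroup.norm, FreeGroup.norm_inv_eq]
    omega
  · rw [FreeGroup.norm, hmul, List.length_append, List.length_drop]
    rfl

/-- the fiber counting bound -/
lemma st15_fiber_card (g : FreeGroup α) (i j t : ℕ) (hp : 1 ≤ g.norm)
    (htp : t ≤ g.norm) (hti : t ≤ i) (hpar : j + 2 * t = i + g.norm) :
    Nat.card {h : FreeGroup α | h.norm = i ∧ (g⁻¹ * h).norm = j}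
      ≤ (2 * Fintype.card α - 1) ^ (i - t) := by
  set p := g.norm
  set u := (g⁻¹).toWord with hu_def
  have hulen : u.length = p := by rw [hu_def, ← FreeGroup.norm, FreeGroup.norm_inv_eq]
  set d : α × Bool := (Classical.arbitrary α, true)
  set f : α × Bool := if t = 0 then st15inv ((u.getLast?).getD d)
    else ((u.drop (p - t)).head?).getD d with hf_def
  set Fib := {h : FreeGroup α | h.norm = i ∧ (g⁻¹ * h).norm = j} with hFib
  haveI : Finite ↥(St15S (i - t) f) := (st15S_finite _ _).to_subtype
  -- key facts for each member
  have key : ∀ h : FreeGroup α, h ∈ Fib →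
      (h.toWord).take t = invRev (u.drop (p - t)) ∧ (h.toWord).drop t ∈ St15S (i - t) f := by
    intro h hh
    obtain ⟨hi, hj⟩ := hh
    obtain ⟨t₀, u', ht₀, hueq, hmul, hrd, hlen1, hlen2⟩ := st15_exists_t g h
    have ht0 : t₀ = t := by
      rw [hi] at ht₀ hlen2
      omega
    subst ht0
    have hL' : u'.length = p - t₀ := by omega
    have hdrop_u : u.drop (p - t₀) = invRev ((h.toWord).take t₀) := by
      rw [← hL', hu_def, hueq, List.drop_left]
    have htake : (h.toWord).take t₀ = invRev (u.drop (p - t₀)) := by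
      rw [hdrop_u, FreeGroup.invRev_invRev]
    refine ⟨htake, ?_, ?_, ?_⟩
    · exact st15_rd_append_right hrd
    · have hlen : h.toWord.length = i := hi
      show (List.drop t₀ h.toWord).length = i - t₀
      rw [List.length_drop, hlen]
    · -- head condition
      by_cases ht00 : t₀ = 0
      · subst ht00
        -- f = st15inv (last of u)
        have hune : u ≠ [] := by
          intro h0
          rw [h0] at hulen
          simp at hulen
          omega
        have hu'u : u' = u := by
          rw [hu_def, hueq]
          simp [FreeGroup.invRev]
        rw [hu'u] at hrd
        have hjunc := (List.isChain_append.mp hrd).2.2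
        intro hcon
        have hgl : u.getLast? = some (u.getLast hune) := List.getLast?_eq_getLast hune
        have hf : f = st15inv (u.getLast hune) := by
          rw [hf_def, if_pos rfl, hgl]
          rfl
        exact (hjunc _ hgl _ hcon) hf
      · -- t₀ ≥ 1
        have htpos : 1 ≤ t₀ := Nat.one_le_iff_ne_zero.mpr ht00
        have htkne : (h.toWord).take t₀ ≠ [] := by
          intro h0
          have hl0 := congrArg List.length h0
          have hlen : h.toWord.length = i := hi
          rw [List.length_take, hlen] at hl0
          simp at hl0
          omega
        have hgl : ((h.toWord).take t₀).getLast? = some (((h.toWord).take t₀).getLast htkne) :=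
          List.getLast?_eq_getLast _
        have hf : f = st15inv (((h.toWord).take t₀).getLast htkne) := by
          rw [hf_def, if_neg ht00, hdrop_u]
          simp [FreeGroup.invRev, List.head?_reverse, List.getLast?_map, hgl, ← List.map_take]
        have hw := st15_rd_toWord h
        rw [← List.take_append_drop t₀ h.toWord] at hw
        have hjunc := (List.isChain_append.mp hw).2.2
        intro hcon
        exact (hjunc _ hgl _ hcon) hf
  rw [← st15S_card (i - t) f]
  refine Nat.card_le_card_of_injective
    (fun h => ⟨(h.1.toWord).drop t, (key h.1 h.2).2⟩) ?_
  intro h h' heq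
  apply Subtype.ext
  apply FreeGroup.toWord_injective
  have h1 : (h.1.toWord).drop t = (h'.1.toWord).drop t := Subtype.ext_iff.mp heq
  rw [← List.take_append_drop t h.1.toWord, ← List.take_append_drop t h'.1.toWord,
    (key h.1 h.2).1, (key h'.1 h'.2).1, h1]
open scoped ENNReal NNReal
-- part 4: analytic assembly

lemma st15_amgm (x y : ℝ≥0∞) : 2 * (x * y) ≤ x ^ 2 + y ^ 2 := by
  rcases eq_or_ne x ⊤ with rfl | hx
  · have h2 : (⊤ : ℝ≥0∞) ^ 2 + y ^ 2 = ⊤ := by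
      simp
    rw [h2]
    exact le_top
  rcases eq_or_ne y ⊤ with rfl | hy
  · have h2 : x ^ 2 + (⊤ : ℝ≥0∞) ^ 2 = ⊤ := by
      simp
    rw [h2]
    exact le_top
  lift x to ℝ≥0 using hx
  lift y to ℝ≥0 using hy
  have hkey : ((2 * (x * y) : ℝ≥0) : ℝ≥0∞) ≤ ((x ^ 2 + y ^ 2 : ℝ≥0) : ℝ≥0∞) := by
    rw [ENNReal.coe_le_coe, ← NNReal.coe_le_coe]
    push_cast
    nlinarith [sq_nonneg ((x : ℝ) - (y : ℝ))]
  simpa [ENNReal.coe_mul, ENNReal.coe_add, ENNReal.coe_pow] using hkey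

theorem stmt_15 (N : ℕ) (hN : 1 ≤ N)
    (ξ : FreeGroup (Fin N) → ℂ)
    (hradial : ∃ lam : ℕ → ℂ, ∀ g : FreeGroup (Fin N), ξ g = lam g.norm)
    (hl2 : Summable fun h : FreeGroup (Fin N) => ‖ξ h‖ ^ 2)
    (hunit : (∑' h : FreeGroup (Fin N), ‖ξ h‖ ^ 2) = 1)
    (φ : FreeGroup (Fin N) → ℂ)
    (hφ : ∀ g : FreeGroup (Fin N),
      φ g = ∑' h : FreeGroup (Fin N), (starRingEnd ℂ) (ξ (g⁻¹ * h)) * ξ h) :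
    ∀ g : FreeGroup (Fin N),
      ‖φ g‖ ≤ ((g.norm : ℝ) + 1) * ((2 * N - 1 : ℝ)) ^ (-(g.norm : ℝ) / 2) := by
  haveI : Nonempty (Fin N) := ⟨⟨0, hN⟩⟩
  obtain ⟨lam, hlam⟩ := hradial
  intro g
  by_cases hg : g = 1
  · -- trivial case g = 1
    subst hg
    have hφ1 : φ 1 = ((∑' h : FreeGroup (Fin N), ‖ξ h‖ ^ 2 : ℝ) : ℂ) := by
      rw [hφ, Complex.ofReal_tsum]
      congr 1
      funext h
      rw [inv_one, one_mul, Complex.conj_mul']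
      push_cast
      ring
    rw [hφ1, hunit]
    simp [FreeGroup.norm_one]
  · -- main case
    set p := g.norm with hp_def
    have hp : 1 ≤ p := Nat.one_le_iff_ne_zero.mpr (fun h0 => hg (FreeGroup.norm_eq_zero.mp h0))
    set K : ℕ := 2 * N - 1 with hK_def
    have hK1 : 1 ≤ K := by omega
    set rE : ℝ≥0∞ := (K : ℝ≥0∞) with hrE_def
    have hrE0 : rE ≠ 0 := by
      simp only [hrE_def, ne_eq, Nat.cast_eq_zero]
      omega
    have hrEtop : rE ≠ ⊤ := ENNReal.natCast_ne_top K
    set La : ℕ → ℝ≥0∞ := fun n => ENNReal.ofReal ‖lam n‖ with hLa_def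
    -- summability
    have hl2' : Summable (fun h : FreeGroup (Fin N) => ‖ξ (g⁻¹ * h)‖ ^ 2) :=
      hl2.comp_injective (mul_right_injective g⁻¹)
    have hprod : Summable (fun h : FreeGroup (Fin N) => ‖ξ (g⁻¹ * h)‖ * ‖ξ h‖) := by
      refine Summable.of_nonneg_of_le (fun h => by positivity) (fun h => ?_)
        ((hl2'.add hl2).div_const 2)
      have := two_mul_le_add_sq ‖ξ (g⁻¹ * h)‖ ‖ξ h‖
      linarith
    -- step 1
    have h1 : ‖φ g‖ ≤ ∑' h : FreeGroup (Fin N), ‖ξ (g⁻¹ * h)‖ * ‖ξ h‖ := by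
      rw [hφ]
      have hnorm : (fun h : FreeGroup (Fin N) => ‖(starRingEnd ℂ) (ξ (g⁻¹ * h)) * ξ h‖)
          = fun h => ‖ξ (g⁻¹ * h)‖ * ‖ξ h‖ := by
        funext h
        simp [norm_mul]
      calc ‖∑' h : FreeGroup (Fin N), (starRingEnd ℂ) (ξ (g⁻¹ * h)) * ξ h‖
          ≤ ∑' h : FreeGroup (Fin N), ‖(starRingEnd ℂ) (ξ (g⁻¹ * h)) * ξ h‖ :=
            norm_tsum_le_tsum_norm (by rw [hnorm]; exact hprod)
        _ = ∑' h : FreeGroup (Fin N), ‖ξ (g⁻¹ * h)‖ * ‖ξ h‖ := by rw [hnorm]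
    -- step 2 : pass to ENNReal
    set F : FreeGroup (Fin N) → ℝ≥0∞ :=
      fun h => ENNReal.ofReal (‖ξ (g⁻¹ * h)‖ * ‖ξ h‖) with hF_def
    have h2 : (∑' h : FreeGroup (Fin N), ‖ξ (g⁻¹ * h)‖ * ‖ξ h‖)
        = (∑' h : FreeGroup (Fin N), F h).toReal := by
      rw [← ENNReal.ofReal_tsum_of_nonneg (fun h => by positivity) hprod,
        ENNReal.toReal_ofReal (tsum_nonneg (fun h => by positivity))]
    -- KEY1
    have key1 : ∑' n : ℕ, rE ^ n * (La n) ^ 2 ≤ 1 := by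
      have e1 : ∑' h : FreeGroup (Fin N), ENNReal.ofReal (‖ξ h‖ ^ 2) = 1 := by
        rw [← ENNReal.ofReal_tsum_of_nonneg (fun h => by positivity) hl2, hunit,
          ENNReal.ofReal_one]
      have e2 : ∑' h : FreeGroup (Fin N), ENNReal.ofReal (‖ξ h‖ ^ 2)
          = ∑' n : ℕ, ∑' (h : {h : FreeGroup (Fin N) // h.norm = n}),
              ENNReal.ofReal (‖ξ h.1‖ ^ 2) := by
        rw [← (Equiv.sigmaFiberEquiv (fun h : FreeGroup (Fin N) => h.norm)).tsum_eq
          (fun h => ENNReal.ofReal (‖ξ h‖ ^ 2)), ENNReal.tsum_sigma']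
        rfl
      have e3 : ∀ n : ℕ, ∑' (h : {h : FreeGroup (Fin N) // h.norm = n}),
          ENNReal.ofReal (‖ξ h.1‖ ^ 2)
          = (Nat.card {h : FreeGroup (Fin N) // h.norm = n}) * (La n) ^ 2 := by
        intro n
        haveI : Finite {h : FreeGroup (Fin N) // h.norm = n} := (st15_sph_finite n).to_subtype
        haveI := Fintype.ofFinite {h : FreeGroup (Fin N) // h.norm = n}
        rw [tsum_fintype]
        have : ∀ h : {h : FreeGroup (Fin N) // h.norm = n},
            ENNReal.ofReal (‖ξ h.1‖ ^ 2) = (La n) ^ 2 := by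
          intro h
          rw [hlam h.1, h.2, hLa_def, ← ENNReal.ofReal_pow (norm_nonneg _)]
        rw [Finset.sum_congr rfl (fun h _ => this h), Finset.sum_const, Finset.card_univ,
          Nat.card_eq_fintype_card, nsmul_eq_mul]
      have e4 : ∀ n : ℕ, rE ^ n * (La n) ^ 2
          ≤ (Nat.card {h : FreeGroup (Fin N) // h.norm = n}) * (La n) ^ 2 := by
        intro n
        apply mul_le_mul_left
        have hge := st15_sph_card_ge (α := Fin N) n
        rw [Fintype.card_fin] at hge
        rw [hrE_def, ← Nat.cast_pow, Nat.cast_le]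
        exact hge
      calc ∑' n : ℕ, rE ^ n * (La n) ^ 2
          ≤ ∑' n : ℕ, (Nat.card {h : FreeGroup (Fin N) // h.norm = n}) * (La n) ^ 2 :=
            ENNReal.tsum_le_tsum e4
        _ = ∑' h : FreeGroup (Fin N), ENNReal.ofReal (‖ξ h‖ ^ 2) := by
            rw [e2]; exact tsum_congr (fun n => (e3 n).symm)
        _ = 1 := e1
    -- B and KEY2
    set B : ℕ → ℝ≥0∞ := fun n => rE ^ ((n : ℝ) / 2) * La n with hB_def
    have hB2 : ∀ n : ℕ, (B n) ^ 2 = rE ^ n * (La n) ^ 2 := by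
      intro n
      rw [hB_def, mul_pow]
      congr 1
      rw [← ENNReal.rpow_natCast (rE ^ ((n : ℝ) / 2)) 2, ← ENNReal.rpow_mul,
        ← ENNReal.rpow_natCast rE n]
      congr 1
      push_cast
      ring
    have key2 : ∑' n : ℕ, (B n) ^ 2 ≤ 1 := by
      calc ∑' n : ℕ, (B n) ^ 2 = ∑' n : ℕ, rE ^ n * (La n) ^ 2 := tsum_congr (fun n => hB2 n)
        _ ≤ 1 := key1
    -- Cauchy-Schwarz-type bound
    have keyCS : ∀ a b : ℕ, ∑' m : ℕ, B (a + m) * B (b + m) ≤ 1 := by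
      intro a b
      have hshift : ∀ c : ℕ, ∑' m : ℕ, (B (c + m)) ^ 2 ≤ 1 := by
        intro c
        refine le_trans ?_ key2
        exact ENNReal.tsum_comp_le_tsum_of_injective (add_right_injective c) (fun n => (B n) ^ 2)
      have h2le : 2 * ∑' m : ℕ, B (a + m) * B (b + m) ≤ 2 * 1 := by
        rw [← ENNReal.tsum_mul_left]
        calc ∑' m : ℕ, 2 * (B (a + m) * B (b + m))
            ≤ ∑' m : ℕ, ((B (a + m)) ^ 2 + (B (b + m)) ^ 2) :=
              ENNReal.tsum_le_tsum (fun m => st15_amgm _ _)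
          _ = (∑' m : ℕ, (B (a + m)) ^ 2) + ∑' m : ℕ, (B (b + m)) ^ 2 := ENNReal.tsum_add
          _ ≤ 1 + 1 := add_le_add (hshift a) (hshift b)
          _ = 2 * 1 := by norm_num
      exact (ENNReal.mul_le_mul_iff_right two_ne_zero ENNReal.ofNat_ne_top).mp h2le
    -- fiber decomposition
    set κ : FreeGroup (Fin N) → ℕ × ℕ := fun h => (h.norm, (g⁻¹ * h).norm) with hκ_def
    have hT : (∑' h : FreeGroup (Fin N), F h)
        = ∑' ij : ℕ × ℕ, ∑' (h : {h : FreeGroup (Fin N) // κ h = ij}), F h.1 := by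
      rw [← (Equiv.sigmaFiberEquiv κ).tsum_eq F, ENNReal.tsum_sigma']
      rfl
    set G : ℕ × ℕ → ℝ≥0∞ := fun ij =>
      if ∃ t, t ≤ p ∧ t ≤ ij.1 ∧ ij.2 + 2 * t = ij.1 + p then
        rE ^ (-(p : ℝ) / 2) * (B ij.1 * B ij.2) else 0 with hG_def
    -- the pointwise fiber bound
    have hfib : ∀ ij : ℕ × ℕ, (∑' (h : {h : FreeGroup (Fin N) // κ h = ij}), F h.1) ≤ G ij := by
      intro ij
      obtain ⟨i, j⟩ := ij
      rcases isEmpty_or_nonempty {h : FreeGroup (Fin N) // κ h = (i, j)} with hE | hNE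
      · rw [tsum_empty]
        exact zero_le
      · obtain ⟨⟨h₀, hh₀⟩⟩ := hNE
        have hnorms : h₀.norm = i ∧ (g⁻¹ * h₀).norm = j := by
          constructor
          · exact congrArg Prod.fst hh₀
          · exact congrArg Prod.snd hh₀
        -- existence of t
        obtain ⟨t₀, u', ht₀, hueq, hmul, hrd, hlen1, hlen2⟩ := st15_exists_t g h₀
        have hprop : ∃ t, t ≤ p ∧ t ≤ i ∧ j + 2 * t = i + p := by
          refine ⟨t₀, by omega, by omega, by omega⟩
        obtain ⟨t, htp, hti, hpar⟩ := hprop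
        have hGval : G (i, j) = rE ^ (-(p : ℝ) / 2) * (B i * B j) :=
          if_pos ⟨t, htp, hti, hpar⟩
        -- fiber is finite
        have hsub : {h : FreeGroup (Fin N) | κ h = (i, j)} ⊆ St15Sph i := by
          intro h hh
          exact congrArg Prod.fst hh
        have hfin : {h : FreeGroup (Fin N) | κ h = (i, j)}.Finite :=
          Set.Finite.subset (st15_sph_finite i) hsub
        haveI : Finite {h : FreeGroup (Fin N) // κ h = (i, j)} := hfin.to_subtype
        haveI := Fintype.ofFinite {h : FreeGroup (Fin N) // κ h = (i, j)}
        -- constant value on fiber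
        have hconst : ∀ h : {h : FreeGroup (Fin N) // κ h = (i, j)}, F h.1 = La j * La i := by
          intro h
          have hi : h.1.norm = i := congrArg Prod.fst h.2
          have hj : (g⁻¹ * h.1).norm = j := congrArg Prod.snd h.2
          show ENNReal.ofReal (‖ξ (g⁻¹ * h.1)‖ * ‖ξ h.1‖) = _
          rw [ENNReal.ofReal_mul (norm_nonneg _), hlam h.1, hlam (g⁻¹ * h.1), hi, hj]
        have hsum : (∑' (h : {h : FreeGroup (Fin N) // κ h = (i, j)}), F h.1)
            = (Nat.card {h : FreeGroup (Fin N) // κ h = (i, j)}) * (La j * La i) := by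
          rw [tsum_fintype, Finset.sum_congr rfl (fun h _ => hconst h), Finset.sum_const,
            Finset.card_univ, Nat.card_eq_fintype_card, nsmul_eq_mul]
        -- cardinality bound
        have hcard : Nat.card {h : FreeGroup (Fin N) // κ h = (i, j)} ≤ K ^ (i - t) := by
          have hcongr : Nat.card {h : FreeGroup (Fin N) // κ h = (i, j)}
              = Nat.card {h : FreeGroup (Fin N) | h.norm = i ∧ (g⁻¹ * h).norm = j} := by
            apply Nat.card_congr
            apply Equiv.subtypeEquivRight
            intro h
            constructor
            · intro hh
              exact ⟨congrArg Prod.fst hh, congrArg Prod.snd hh⟩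
            · intro hh
              exact Prod.ext hh.1 hh.2
          rw [hcongr]
          have := st15_fiber_card (α := Fin N) g i j t hp htp hti hpar
          rwa [Fintype.card_fin] at this
        -- power identity
        have hpowid : (rE ^ (i - t) : ℝ≥0∞) = rE ^ (-(p : ℝ) / 2) * (rE ^ ((i : ℝ) / 2) * rE ^ ((j : ℝ) / 2)) := by
          rw [← ENNReal.rpow_natCast rE (i - t), ← ENNReal.rpow_add _ _ hrE0 hrEtop,
            ← ENNReal.rpow_add _ _ hrE0 hrEtop]
          congr 1
          have : ((i - t : ℕ) : ℝ) = (i : ℝ) - (t : ℝ) := by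
            push_cast [Nat.cast_sub hti]
            ring
          rw [this]
          have hj' : (j : ℝ) + 2 * t = (i : ℝ) + p := by exact_mod_cast hpar
          linarith
        calc (∑' (h : {h : FreeGroup (Fin N) // κ h = (i, j)}), F h.1)
            = (Nat.card {h : FreeGroup (Fin N) // κ h = (i, j)}) * (La j * La i) := hsum
          _ ≤ (K ^ (i - t) : ℕ) * (La j * La i) := by
              apply mul_le_mul_left
              exact_mod_cast Nat.cast_le.mpr hcard
          _ = rE ^ (i - t) * (La j * La i) := by
              rw [hrE_def, Nat.cast_pow]
          _ = rE ^ (-(p : ℝ) / 2) * (B i * B j) := by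
              rw [hpowid, hB_def]
              ring
          _ = G (i, j) := hGval.symm
    -- reindexing
    set H : ℕ × ℕ → ℝ≥0∞ := fun tm =>
      if tm.1 ≤ p then rE ^ (-(p : ℝ) / 2) * (B (tm.1 + tm.2) * B ((p - tm.1) + tm.2)) else 0
      with hH_def
    have hGH : (∑' ij : ℕ × ℕ, G ij) = ∑' tm : ℕ × ℕ, H tm := by
      apply tsum_eq_tsum_of_ne_zero_bij
        (fun tm => ((tm.1.1 + tm.1.2 : ℕ), ((p - tm.1.1) + tm.1.2 : ℕ)))
      · intro x y hxy
        have h1 : x.1.1 + x.1.2 = y.1.1 + y.1.2 := congrArg Prod.fst hxy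
        have h2 : (p - x.1.1) + x.1.2 = (p - y.1.1) + y.1.2 := congrArg Prod.snd hxy
        have hx : x.1.1 ≤ p := by
          by_contra hc
          exact x.2 (if_neg hc)
        have hy : y.1.1 ≤ p := by
          by_contra hc
          exact y.2 (if_neg hc)
        have : x.1.1 = y.1.1 ∧ x.1.2 = y.1.2 := by omega
        exact Subtype.ext (Prod.ext this.1 this.2)
      · intro ij hij
        have hij' : G ij ≠ 0 := hij
        by_cases hcond : ∃ t, t ≤ p ∧ t ≤ ij.1 ∧ ij.2 + 2 * t = ij.1 + p
        · obtain ⟨t, htp', hti', hpar'⟩ := hcond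
          have e1 : t + (ij.1 - t) = ij.1 := by omega
          have e2 : (p - t) + (ij.1 - t) = ij.2 := by omega
          have hHval : H (t, ij.1 - t) = rE ^ (-(p : ℝ) / 2)
              * (B (t + (ij.1 - t)) * B ((p - t) + (ij.1 - t))) := if_pos htp'
          rw [e1, e2] at hHval
          have hGval : G ij = rE ^ (-(p : ℝ) / 2) * (B ij.1 * B ij.2) :=
            if_pos ⟨t, htp', hti', hpar'⟩
          have hne : H (t, ij.1 - t) ≠ 0 := by
            rw [hHval, ← hGval]
            exact hij'
          rw [Set.mem_range]
          refine ⟨⟨(t, ij.1 - t), hne⟩, ?_⟩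
          show (t + (ij.1 - t), (p - t) + (ij.1 - t)) = ij
          rw [e1, e2]
        · exact absurd (if_neg hcond) hij'
      · intro x
        obtain ⟨⟨t, m⟩, hx⟩ := x
        have htp' : t ≤ p := by
          by_contra hc
          exact hx (if_neg hc)
        show G (t + m, (p - t) + m) = H (t, m)
        have hcond : ∃ t', t' ≤ p ∧ t' ≤ t + m ∧ ((p - t) + m) + 2 * t' = (t + m) + p :=
          ⟨t, htp', by omega, by omega⟩
        have hGv : G (t + m, (p - t) + m)
            = rE ^ (-(p : ℝ) / 2) * (B (t + m) * B ((p - t) + m)) := if_pos hcond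
        have hHv : H (t, m)
            = rE ^ (-(p : ℝ) / 2) * (B (t + m) * B ((p - t) + m)) := if_pos htp'
        rw [hGv, hHv]
    -- compute sum of H
    have hHsum : (∑' tm : ℕ × ℕ, H tm) ≤ ((p : ℝ≥0∞) + 1) * rE ^ (-(p : ℝ) / 2) := by
      rw [ENNReal.tsum_prod']
      have hinner : ∀ t : ℕ, (∑' m : ℕ, H (t, m))
          ≤ (if t ≤ p then rE ^ (-(p : ℝ) / 2) else 0) := by
        intro t
        by_cases htp' : t ≤ p
        · rw [if_pos htp']
          calc (∑' m : ℕ, H (t, m))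
              = rE ^ (-(p : ℝ) / 2) * ∑' m : ℕ, B (t + m) * B ((p - t) + m) := by
                rw [tsum_congr (fun m : ℕ => (if_pos htp' :
                  H (t, m) = rE ^ (-(p : ℝ) / 2) * (B (t + m) * B ((p - t) + m)))),
                  ENNReal.tsum_mul_left]
            _ ≤ rE ^ (-(p : ℝ) / 2) * 1 := mul_le_mul_right (keyCS t (p - t)) _
            _ = rE ^ (-(p : ℝ) / 2) := mul_one _
        · rw [if_neg htp']
          have : ∀ m : ℕ, H (t, m) = 0 := fun m => if_neg htp'
          rw [tsum_congr this]
          simp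
      calc (∑' t : ℕ, ∑' m : ℕ, H (t, m))
          ≤ ∑' t : ℕ, (if t ≤ p then rE ^ (-(p : ℝ) / 2) else 0) := ENNReal.tsum_le_tsum hinner
        _ = ∑ t ∈ Finset.range (p + 1), (if t ≤ p then rE ^ (-(p : ℝ) / 2) else 0) := by
            apply tsum_eq_sum
            intro t ht
            rw [Finset.mem_range] at ht
            exact if_neg (by omega)
        _ = ∑ t ∈ Finset.range (p + 1), rE ^ (-(p : ℝ) / 2) := by
            apply Finset.sum_congr rfl
            intro t ht
            rw [Finset.mem_range] at ht
            exact if_pos (by omega)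
        _ = ((p : ℝ≥0∞) + 1) * rE ^ (-(p : ℝ) / 2) := by
            rw [Finset.sum_const, Finset.card_range, nsmul_eq_mul]
            push_cast
            ring
    -- put everything together
    have hTbound : (∑' h : FreeGroup (Fin N), F h) ≤ ((p : ℝ≥0∞) + 1) * rE ^ (-(p : ℝ) / 2) := by
      rw [hT]
      calc (∑' ij : ℕ × ℕ, ∑' (h : {h : FreeGroup (Fin N) // κ h = ij}), F h.1)
          ≤ ∑' ij : ℕ × ℕ, G ij := ENNReal.tsum_le_tsum hfib
        _ = ∑' tm : ℕ × ℕ, H tm := hGH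
        _ ≤ ((p : ℝ≥0∞) + 1) * rE ^ (-(p : ℝ) / 2) := hHsum
    have hEtop : ((p : ℝ≥0∞) + 1) * rE ^ (-(p : ℝ) / 2) ≠ ⊤ := by
      apply ENNReal.mul_ne_top
      · exact ENNReal.add_ne_top.mpr ⟨ENNReal.natCast_ne_top p, ENNReal.one_ne_top⟩
      · rw [ne_eq, ENNReal.rpow_eq_top_iff]
        push_neg
        exact ⟨fun h0 => absurd h0 hrE0, fun htop => absurd htop hrEtop⟩
    have hfinal : ‖φ g‖ ≤ (((p : ℝ≥0∞) + 1) * rE ^ (-(p : ℝ) / 2)).toReal := by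
      refine h1.trans ?_
      rw [h2]
      exact ENNReal.toReal_mono hEtop hTbound
    refine hfinal.trans (le_of_eq ?_)
    have hA : ((p : ℝ≥0∞) + 1).toReal = (p : ℝ) + 1 := by
      rw [ENNReal.toReal_add (ENNReal.natCast_ne_top p) ENNReal.one_ne_top]
      simp
    have hBv : rE.toReal = (2 * (N : ℝ) - 1 : ℝ) := by
      rw [hrE_def]
      rw [show ((K : ℝ≥0∞)).toReal = (K : ℝ) by simp]
      rw [hK_def]
      push_cast [Nat.cast_sub (by omega : 1 ≤ 2 * N)]
      ring
    rw [ENNReal.toReal_mul, ← ENNReal.toReal_rpow, hA, hBv]
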